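/- Let 𝒜 be the Boolean algebra of subsets of ω₁ of the form U_X = ⋃_{ξ∈X} I_ξ, where I_ξ = [ω·ξ, ω·(ξ+1)) and X ⊆ ω₁ is countable or cocountable. Given a coherent family {s_α : α < ω₁}, the map h : 𝒜 → 𝒫(ℕ)/Fin defined by h(U_X) = [s_{α(X)}[U_X]] for countable X (where α(X) is least with X ⊆ ω·α(X), identifying ω·α(X) with a subset of the domain appropriately) and h(U_X) = complement of h(U_{ω₁\X}) for cocountable X, is a well-defined injective Boolean homomorphism. -/

import Mathlib

noncomputable section

open Set
open scoped Ordinal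

/-- The first uncountable ordinal `ω₁`. -/
def omega1 : Ordinal := (Cardinal.aleph 1).ord

/-- `{s_α : α < ω₁}` is a coherent family: each `s_α` is injective on `ω·α`
(the set of ordinals `< ω·α`) and `s_α` agrees with `s_β` on `ω·β` except at
finitely many points, for all `β < α < ω₁`. -/
def IsCoherentFamily (s : Ordinal → Ordinal → ℕ) : Prop :=
  ∀ α < omega1,
    Set.InjOn (s α) (Set.Iio (Ordinal.omega0 * α)) ∧
    ∀ β < α, {γ : Ordinal | γ < Ordinal.omega0 * β ∧ s α γ ≠ s β γ}.Finite

open scoped Classical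

/-- `A =* B`: the symmetric difference of `A, B ⊆ ℕ` is finite, i.e. `[A] = [B]`
in `𝒫(ℕ)/Fin`. -/
def EqStar (A B : Set ℕ) : Prop := ((A \ B) ∪ (B \ A)).Finite

/-- `U_X = ⋃_{ξ ∈ X} I_ξ` where `I_ξ = [ω·ξ, ω·(ξ+1))`. -/
def USet (X : Set Ordinal) : Set Ordinal :=
  ⋃ ξ ∈ X, Set.Ico (Ordinal.omega0 * ξ) (Ordinal.omega0 * ξ + Ordinal.omega0)

/-- `α(X)`: the least ordinal `α` such that `U_X ⊆ ω·α`, i.e. `ξ < α` for all `ξ ∈ X`. -/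
def alphaOf (X : Set Ordinal) : Ordinal := sInf {α : Ordinal | ∀ ξ ∈ X, ξ < α}

/-- The map `h`: on a countable `X`, `h(U_X) = [s_{α(X)}[U_X]]`; on a cocountable `X`,
`h(U_X)` is the complement of `h(U_{ω₁ \ X})` (here given by representatives). -/
def hmap (s : Ordinal → Ordinal → ℕ) (X : Set Ordinal) : Set ℕ :=
  if X.Countable then s (alphaOf X) '' USet X
  else (s (alphaOf (Set.Iio omega1 \ X)) '' USet (Set.Iio omega1 \ X))ᶜ


section Aux

open Cardinal Ordinal

universe u

lemma not_countable_Iio_omega1 : ¬ (Set.Iio omega1.{u}).Countable := by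
  intro h
  have h2 : #(Set.Iio omega1) ≤ ℵ₀ := h.le_aleph0
  rw [Ordinal.mk_Iio_ordinal, omega1, Cardinal.card_ord, ← Cardinal.lift_aleph0.{u+1,u},
    Cardinal.lift_le] at h2
  exact absurd h2 (not_le.mpr Cardinal.aleph0_lt_aleph_one)

lemma omega1_pos : (0 : Ordinal.{u}) < omega1 := by
  rw [omega1, Cardinal.lt_ord]
  simpa using aleph0_lt_aleph_one.trans_le' aleph0_pos.le

lemma omega1_isLimit : Order.IsSuccLimit omega1.{u} :=
  Cardinal.isSuccLimit_ord (Cardinal.aleph0_le_aleph 1)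

/-- The interval `I_ξ = [ω·ξ, ω·(ξ+1))`. -/
def Iseg (ξ : Ordinal) : Set Ordinal :=
  Set.Ico (Ordinal.omega0 * ξ) (Ordinal.omega0 * ξ + Ordinal.omega0)

lemma USet_eq_iUnion (X : Set Ordinal) : USet X = ⋃ ξ ∈ X, Iseg ξ := rfl

lemma mem_USet_iff {X : Set Ordinal} {x : Ordinal} :
    x ∈ USet X ↔ ∃ ξ ∈ X, x ∈ Iseg ξ := by
  simp only [USet, Iseg, Set.mem_iUnion, Set.mem_Ico, exists_prop]

lemma Iseg_upper {ξ α : Ordinal} (h : ξ < α) {x : Ordinal} (hx : x ∈ Iseg ξ) :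
    x < Ordinal.omega0 * α := by
  have h1 : Ordinal.omega0 * ξ + Ordinal.omega0 = Ordinal.omega0 * Order.succ ξ :=
    (Ordinal.mul_succ _ _).symm
  have h2 : Ordinal.omega0 * Order.succ ξ ≤ Ordinal.omega0 * α :=
    mul_le_mul_right (Order.succ_le_of_lt h) _
  exact hx.2.trans_le (h1 ▸ h2)

lemma Iseg_disjoint {ξ η : Ordinal} (h : ξ ≠ η) (x : Ordinal)
    (hx : x ∈ Iseg ξ) (hy : x ∈ Iseg η) : False := by
  rcases h.lt_or_gt with hlt | hlt
  · exact absurd hy.1 (not_le.mpr ((Iseg_upper hlt hx).trans_le (le_refl _)))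
  · exact absurd hx.1 (not_le.mpr ((Iseg_upper hlt hy).trans_le (le_refl _)))

lemma Iseg_subset_USet {X : Set Ordinal} {ξ : Ordinal} (hξ : ξ ∈ X) : Iseg ξ ⊆ USet X :=
  fun x hx => mem_USet_iff.mpr ⟨ξ, hξ, hx⟩

lemma USet_subset_Iio {X : Set Ordinal} {α : Ordinal} (h : ∀ ξ ∈ X, ξ < α) :
    USet X ⊆ Set.Iio (Ordinal.omega0 * α) := by
  intro x hx
  obtain ⟨ξ, hξ, hxξ⟩ := mem_USet_iff.mp hx
  exact Iseg_upper (h ξ hξ) hxξ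

lemma USet_inter (X Y : Set Ordinal) : USet (X ∩ Y) = USet X ∩ USet Y := by
  ext x
  simp only [mem_USet_iff, Set.mem_inter_iff]
  constructor
  · rintro ⟨ξ, ⟨hξX, hξY⟩, hx⟩
    exact ⟨⟨ξ, hξX, hx⟩, ⟨ξ, hξY, hx⟩⟩
  · rintro ⟨⟨ξ, hξX, hx⟩, ⟨η, hηY, hy⟩⟩
    have : ξ = η := by
      by_contra hne
      exact Iseg_disjoint hne x hx hy
    exact ⟨ξ, ⟨hξX, this ▸ hηY⟩, hx⟩

lemma USet_union (X Y : Set Ordinal) : USet (X ∪ Y) = USet X ∪ USet Y := by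
  ext x
  simp only [mem_USet_iff, Set.mem_union, Set.mem_union]
  constructor
  · rintro ⟨ξ, hξ | hξ, hx⟩
    · exact Or.inl ⟨ξ, hξ, hx⟩
    · exact Or.inr ⟨ξ, hξ, hx⟩
  · rintro (⟨ξ, hξ, hx⟩ | ⟨ξ, hξ, hx⟩)
    · exact ⟨ξ, Or.inl hξ, hx⟩
    · exact ⟨ξ, Or.inr hξ, hx⟩

lemma USet_diff (X Y : Set Ordinal) : USet (X \ Y) = USet X \ USet Y := by
  ext x
  simp only [mem_USet_iff, Set.mem_diff]
  constructor
  · rintro ⟨ξ, ⟨hξX, hξY⟩, hx⟩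
    refine ⟨⟨ξ, hξX, hx⟩, ?_⟩
    rintro ⟨η, hηY, hy⟩
    have : ξ = η := by
      by_contra hne
      exact Iseg_disjoint hne x hx hy
    exact hξY (this ▸ hηY)
  · rintro ⟨⟨ξ, hξX, hx⟩, hnot⟩
    exact ⟨ξ, ⟨hξX, fun hξY => hnot ⟨ξ, hξY, hx⟩⟩, hx⟩

lemma Iseg_infinite (ξ : Ordinal) : (Iseg ξ).Infinite := by
  refine Set.infinite_of_injective_forall_mem
    (f := fun n : ℕ => Ordinal.omega0 * ξ + (n : Ordinal)) ?_ ?_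
  · intro a b hab
    simp only [add_right_inj] at hab
    exact_mod_cast hab
  · intro n
    exact ⟨le_add_of_nonneg_right (zero_le (a := (n : Ordinal))),
      add_lt_add_right (Ordinal.nat_lt_omega0 n) _⟩

lemma alphaOf_spec {X : Set Ordinal} (hX : X ⊆ Set.Iio omega1) :
    ∀ ξ ∈ X, ξ < alphaOf X := by
  have hne : {α : Ordinal | ∀ ξ ∈ X, ξ < α}.Nonempty := ⟨omega1, fun ξ h => hX h⟩
  exact csInf_mem hne

lemma alphaOf_le {X : Set Ordinal} {α : Ordinal} (h : ∀ ξ ∈ X, ξ < α) : alphaOf X ≤ α :=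
  csInf_le' h

lemma alphaOf_lt_omega1 {X : Set Ordinal} (hX : X ⊆ Set.Iio omega1) (hc : X.Countable) :
    alphaOf X < omega1 := by
  rcases X.eq_empty_or_nonempty with rfl | hne
  · exact lt_of_le_of_lt (alphaOf_le (by simp)) omega1_pos
  · obtain ⟨g, hg⟩ := hc.exists_eq_range hne
    have hb : ∀ n : ℕ, g n + 1 < omega1 := by
      intro n
      have hmem : g n ∈ X := hg ▸ Set.mem_range_self n
      have h1 : g n < omega1 := hX hmem
      rw [Ordinal.add_one_eq_succ]
      exact omega1_isLimit.succ_lt h1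
    have hβ : (⨆ n : ℕ, g n + 1) < omega1 := by
      rw [omega1]
      apply Cardinal.iSup_lt_ord_lift_of_isRegular Cardinal.isRegular_aleph_one
      · rw [Cardinal.mk_eq_aleph0, Cardinal.lift_aleph0]
        exact Cardinal.aleph0_lt_aleph_one
      · intro n
        rw [← omega1]
        exact hb n
    refine lt_of_le_of_lt (alphaOf_le ?_) hβ
    intro ξ hξ
    rw [hg] at hξ
    obtain ⟨n, rfl⟩ := hξ
    calc g n < g n + 1 := by
          rw [Ordinal.add_one_eq_succ]; exact Order.lt_succ _
      _ ≤ ⨆ n : ℕ, g n + 1 := le_ciSup (Ordinal.bddAbove_range _) n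

/-! ### `EqStar` lemmas -/

lemma eqStar_refl (A : Set ℕ) : EqStar A A := by simp [EqStar]

lemma eqStar_symm {A B : Set ℕ} (h : EqStar A B) : EqStar B A := by
  rw [EqStar, Set.union_comm]; exact h

lemma eqStar_trans {A B C : Set ℕ} (h1 : EqStar A B) (h2 : EqStar B C) : EqStar A C := by
  refine (h1.union h2).subset ?_
  intro x hx
  rcases hx with ⟨hA, hC⟩ | ⟨hC, hA⟩ <;> by_cases hB : x ∈ B
  · exact Or.inr (Or.inl ⟨hB, hC⟩)
  · exact Or.inl (Or.inl ⟨hA, hB⟩)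
  · exact Or.inl (Or.inr ⟨hB, hA⟩)
  · exact Or.inr (Or.inr ⟨hC, hB⟩)

lemma eqStar_compl {A B : Set ℕ} (h : EqStar A B) : EqStar Aᶜ Bᶜ := by
  refine h.subset ?_
  intro x hx
  rcases hx with ⟨hA, hB⟩ | ⟨hB, hA⟩
  · exact Or.inr ⟨not_not.mp (by simpa using hB), hA⟩
  · exact Or.inl ⟨not_not.mp (by simpa using hA), hB⟩

lemma eqStar_inter {A A' B B' : Set ℕ} (hA : EqStar A A') (hB : EqStar B B') :
    EqStar (A ∩ B) (A' ∩ B') := by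
  refine (hA.union hB).subset ?_
  intro x hx
  rcases hx with ⟨⟨hxA, hxB⟩, hx'⟩ | ⟨⟨hxA', hxB'⟩, hx'⟩
  · by_cases h1 : x ∈ A'
    · have h2 : x ∉ B' := fun h => hx' ⟨h1, h⟩
      exact Or.inr (Or.inl ⟨hxB, h2⟩)
    · exact Or.inl (Or.inl ⟨hxA, h1⟩)
  · by_cases h1 : x ∈ A
    · have h2 : x ∉ B := fun h => hx' ⟨h1, h⟩
      exact Or.inr (Or.inr ⟨hxB', h2⟩)
    · exact Or.inl (Or.inr ⟨hxA', h1⟩)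

lemma eqStar_union {A A' B B' : Set ℕ} (hA : EqStar A A') (hB : EqStar B B') :
    EqStar (A ∪ B) (A' ∪ B') := by
  refine (hA.union hB).subset ?_
  intro x hx
  rcases hx with ⟨hxAB, hx'⟩ | ⟨hxAB, hx'⟩
  · rcases hxAB with hxA | hxB
    · exact Or.inl (Or.inl ⟨hxA, fun h => hx' (Or.inl h)⟩)
    · exact Or.inr (Or.inl ⟨hxB, fun h => hx' (Or.inr h)⟩)
  · rcases hxAB with hxA | hxB
    · exact Or.inl (Or.inr ⟨hxA, fun h => hx' (Or.inl h)⟩)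
    · exact Or.inr (Or.inr ⟨hxB, fun h => hx' (Or.inr h)⟩)

lemma not_eqStar_of_infinite {A B : Set ℕ} (h : (B \ A).Infinite) : ¬ EqStar A B :=
  fun he => h (he.subset Set.subset_union_right)

/-! ### Coherence lemmas -/

lemma image_eqStar {s : Ordinal → Ordinal → ℕ} (hs : IsCoherentFamily s)
    {α β : Ordinal} {A : Set Ordinal} (hα : α < omega1) (hβα : β ≤ α)
    (hA : A ⊆ Set.Iio (Ordinal.omega0 * β)) :
    EqStar (s α '' A) (s β '' A) := by
  rcases eq_or_lt_of_le hβα with rfl | h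
  · exact eqStar_refl _
  · obtain ⟨_, hfin⟩ := hs α hα
    have hF := hfin β h
    refine ((hF.image (s α)).union (hF.image (s β))).subset ?_
    rintro n (⟨⟨γ, hγA, rfl⟩, hn⟩ | ⟨⟨γ, hγA, rfl⟩, hn⟩)
    · exact Or.inl ⟨γ, ⟨hA hγA, fun he => hn ⟨γ, hγA, he.symm⟩⟩, rfl⟩
    · exact Or.inr ⟨γ, ⟨hA hγA, fun he => hn ⟨γ, hγA, he⟩⟩, rfl⟩

lemma hmap_ctble_eqStar {s : Ordinal → Ordinal → ℕ} (hs : IsCoherentFamily s)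
    {X : Set Ordinal} (hX : X ⊆ Set.Iio omega1) (hc : X.Countable)
    {α : Ordinal} (hα : α < omega1) (hbd : ∀ ξ ∈ X, ξ < α) :
    EqStar (hmap s X) (s α '' USet X) := by
  rw [hmap, if_pos hc]
  exact eqStar_symm (image_eqStar hs hα (alphaOf_le hbd) (USet_subset_Iio (alphaOf_spec hX)))

lemma hmap_compl {s : Ordinal → Ordinal → ℕ} {X : Set Ordinal}
    (hX : X ⊆ Set.Iio omega1)
    (hor : X.Countable ∨ (Set.Iio omega1 \ X).Countable) :
    hmap s (Set.Iio omega1 \ X) = (hmap s X)ᶜ := by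
  by_cases hc : X.Countable
  · have h1 : ¬ (Set.Iio omega1 \ X).Countable := by
      intro h
      apply not_countable_Iio_omega1
      refine ((h.union hc).mono ?_)
      intro z hz
      by_cases hzX : z ∈ X
      · exact Or.inr hzX
      · exact Or.inl ⟨hz, hzX⟩
    rw [hmap, if_neg h1, hmap, if_pos hc, Set.diff_diff_cancel_left hX]
  · have h1 : (Set.Iio omega1 \ X).Countable := hor.resolve_left hc
    rw [hmap, if_pos h1, hmap, if_neg hc, compl_compl]

lemma hmap_empty (s : Ordinal → Ordinal → ℕ) : hmap s (∅ : Set Ordinal) = ∅ := by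
  rw [hmap, if_pos Set.countable_empty]
  simp [USet]

lemma hmap_univ (s : Ordinal → Ordinal → ℕ) : hmap s (Set.Iio omega1) = Set.univ := by
  rw [hmap, if_neg not_countable_Iio_omega1]
  simp [USet]


/-! ### Injective image of difference -/

lemma injOn_image_diff {f : Ordinal → ℕ} {D A B : Set Ordinal} (hf : Set.InjOn f D)
    (hA : A ⊆ D) (hB : B ⊆ D) : f '' (A \ B) = f '' A \ f '' B := by
  ext n
  constructor
  · rintro ⟨x, ⟨hxA, hxB⟩, rfl⟩
    refine ⟨⟨x, hxA, rfl⟩, ?_⟩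
    rintro ⟨y, hyB, hy⟩
    have hyx : y = x := hf (hB hyB) (hA hxA) hy
    exact hxB (hyx ▸ hyB)
  · rintro ⟨⟨x, hxA, rfl⟩, hn⟩
    exact ⟨x, ⟨hxA, fun hxB => hn ⟨x, hxB, rfl⟩⟩, rfl⟩

/-! ### Intersection -/

lemma hmap_inter_cc {s : Ordinal → Ordinal → ℕ} (hs : IsCoherentFamily s)
    {X Y : Set Ordinal} (hX : X ⊆ Set.Iio omega1) (hY : Y ⊆ Set.Iio omega1)
    (hXc : X.Countable) (hYnc : ¬ Y.Countable)
    (hY'c : (Set.Iio omega1 \ Y).Countable) :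
    EqStar (hmap s (X ∩ Y)) (hmap s X ∩ hmap s Y) := by
  have hZsub : X ∪ (Set.Iio omega1 \ Y) ⊆ Set.Iio omega1 :=
    Set.union_subset hX Set.diff_subset
  have hZc : (X ∪ (Set.Iio omega1 \ Y)).Countable := hXc.union hY'c
  have hα : alphaOf (X ∪ (Set.Iio omega1 \ Y)) < omega1 := alphaOf_lt_omega1 hZsub hZc
  have hbdX : ∀ ξ ∈ X, ξ < alphaOf (X ∪ (Set.Iio omega1 \ Y)) :=
    fun ξ h => alphaOf_spec hZsub ξ (Or.inl h)
  have hbdY' : ∀ ξ ∈ Set.Iio omega1 \ Y, ξ < alphaOf (X ∪ (Set.Iio omega1 \ Y)) :=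
    fun ξ h => alphaOf_spec hZsub ξ (Or.inr h)
  have hXY : X ∩ Y = X \ (Set.Iio omega1 \ Y) := by
    ext z
    constructor
    · rintro ⟨h1, h2⟩
      exact ⟨h1, fun h => h.2 h2⟩
    · rintro ⟨h1, h2⟩
      refine ⟨h1, ?_⟩
      by_contra h3
      exact h2 ⟨hX h1, h3⟩
  have hinj := (hs _ hα).1
  have e1 : EqStar (hmap s (X ∩ Y))
      (s (alphaOf (X ∪ (Set.Iio omega1 \ Y))) '' USet (X ∩ Y)) :=
    hmap_ctble_eqStar hs (fun z hz => hX hz.1) (hXc.mono Set.inter_subset_left) hα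
      (fun ξ h => hbdX ξ h.1)
  have e2 : s (alphaOf (X ∪ (Set.Iio omega1 \ Y))) '' USet (X ∩ Y) =
      s (alphaOf (X ∪ (Set.Iio omega1 \ Y))) '' USet X \
        s (alphaOf (X ∪ (Set.Iio omega1 \ Y))) '' USet (Set.Iio omega1 \ Y) := by
    rw [hXY, USet_diff]
    exact injOn_image_diff hinj (USet_subset_Iio hbdX) (USet_subset_Iio hbdY')
  have e3 : EqStar (hmap s X) (s (alphaOf (X ∪ (Set.Iio omega1 \ Y))) '' USet X) :=
    hmap_ctble_eqStar hs hX hXc hα hbdX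
  have e4 : EqStar (hmap s Y)
      ((s (alphaOf (X ∪ (Set.Iio omega1 \ Y))) '' USet (Set.Iio omega1 \ Y))ᶜ) := by
    rw [hmap, if_neg hYnc]
    exact eqStar_compl (eqStar_symm (image_eqStar hs hα (alphaOf_le hbdY')
      (USet_subset_Iio (alphaOf_spec Set.diff_subset))))
  refine eqStar_trans (eqStar_trans e1 ?_) (eqStar_inter (eqStar_symm e3) (eqStar_symm e4))
  rw [e2, Set.diff_eq]
  exact eqStar_refl _

lemma hmap_inter {s : Ordinal → Ordinal → ℕ} (hs : IsCoherentFamily s)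
    {X Y : Set Ordinal} (hX : X ⊆ Set.Iio omega1) (hY : Y ⊆ Set.Iio omega1)
    (horX : X.Countable ∨ (Set.Iio omega1 \ X).Countable)
    (horY : Y.Countable ∨ (Set.Iio omega1 \ Y).Countable) :
    EqStar (hmap s (X ∩ Y)) (hmap s X ∩ hmap s Y) := by
  by_cases hXc : X.Countable <;> by_cases hYc : Y.Countable
  · -- both countable
    have hZsub : X ∪ Y ⊆ Set.Iio omega1 := Set.union_subset hX hY
    have hα : alphaOf (X ∪ Y) < omega1 := alphaOf_lt_omega1 hZsub (hXc.union hYc)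
    have hbdX : ∀ ξ ∈ X, ξ < alphaOf (X ∪ Y) := fun ξ h => alphaOf_spec hZsub ξ (Or.inl h)
    have hbdY : ∀ ξ ∈ Y, ξ < alphaOf (X ∪ Y) := fun ξ h => alphaOf_spec hZsub ξ (Or.inr h)
    have e1 : EqStar (hmap s (X ∩ Y)) (s (alphaOf (X ∪ Y)) '' USet (X ∩ Y)) :=
      hmap_ctble_eqStar hs (fun z hz => hX hz.1) (hXc.mono Set.inter_subset_left) hα
        (fun ξ h => hbdX ξ h.1)
    have e2 : s (alphaOf (X ∪ Y)) '' USet (X ∩ Y) =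
        s (alphaOf (X ∪ Y)) '' USet X ∩ s (alphaOf (X ∪ Y)) '' USet Y := by
      rw [USet_inter]
      exact Set.InjOn.image_inter (hs _ hα).1 (USet_subset_Iio hbdX) (USet_subset_Iio hbdY)
    refine eqStar_trans e1 ?_
    rw [e2]
    exact eqStar_inter (eqStar_symm (hmap_ctble_eqStar hs hX hXc hα hbdX))
      (eqStar_symm (hmap_ctble_eqStar hs hY hYc hα hbdY))
  · exact hmap_inter_cc hs hX hY hXc hYc (horY.resolve_left hYc)
  · have h := hmap_inter_cc hs hY hX hYc hXc (horX.resolve_left hXc)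
    rw [Set.inter_comm, Set.inter_comm (hmap s X)]
    exact h
  · -- both cocountable
    have hX'c : (Set.Iio omega1 \ X).Countable := horX.resolve_left hXc
    have hY'c : (Set.Iio omega1 \ Y).Countable := horY.resolve_left hYc
    have hZsub : (Set.Iio omega1 \ X) ∪ (Set.Iio omega1 \ Y) ⊆ Set.Iio omega1 :=
      Set.union_subset Set.diff_subset Set.diff_subset
    have hZc := hX'c.union hY'c
    have hα : alphaOf ((Set.Iio omega1 \ X) ∪ (Set.Iio omega1 \ Y)) < omega1 :=
      alphaOf_lt_omega1 hZsub hZc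
    have hbdX' : ∀ ξ ∈ Set.Iio omega1 \ X,
        ξ < alphaOf ((Set.Iio omega1 \ X) ∪ (Set.Iio omega1 \ Y)) :=
      fun ξ h => alphaOf_spec hZsub ξ (Or.inl h)
    have hbdY' : ∀ ξ ∈ Set.Iio omega1 \ Y,
        ξ < alphaOf ((Set.Iio omega1 \ X) ∪ (Set.Iio omega1 \ Y)) :=
      fun ξ h => alphaOf_spec hZsub ξ (Or.inr h)
    have hcompl_eq : Set.Iio omega1 \ (X ∩ Y) =
        (Set.Iio omega1 \ X) ∪ (Set.Iio omega1 \ Y) := by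
      ext z
      constructor
      · rintro ⟨hz, hne⟩
        by_cases hzX : z ∈ X
        · exact Or.inr ⟨hz, fun hzY => hne ⟨hzX, hzY⟩⟩
        · exact Or.inl ⟨hz, hzX⟩
      · rintro (⟨hz, h⟩ | ⟨hz, h⟩)
        · exact ⟨hz, fun hin => h hin.1⟩
        · exact ⟨hz, fun hin => h hin.2⟩
    have hIc : ¬ (X ∩ Y).Countable := by
      intro h
      apply not_countable_Iio_omega1
      refine ((h.union hZc).mono ?_)
      intro z hz
      by_cases h1 : z ∈ X ∩ Y
      · exact Or.inl h1
      · right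
        rw [← hcompl_eq]
        exact ⟨hz, h1⟩
    rw [hmap, if_neg hIc, hcompl_eq]
    have eX : hmap s X =
        (s (alphaOf (Set.Iio omega1 \ X)) '' USet (Set.Iio omega1 \ X))ᶜ := by
      rw [hmap, if_neg hXc]
    have eY : hmap s Y =
        (s (alphaOf (Set.Iio omega1 \ Y)) '' USet (Set.Iio omega1 \ Y))ᶜ := by
      rw [hmap, if_neg hYc]
    have fX : EqStar
        ((s (alphaOf ((Set.Iio omega1 \ X) ∪ (Set.Iio omega1 \ Y))) ''
          USet (Set.Iio omega1 \ X))ᶜ) (hmap s X) := by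
      rw [eX]
      exact eqStar_compl (image_eqStar hs hα (alphaOf_le hbdX')
        (USet_subset_Iio (alphaOf_spec Set.diff_subset)))
    have fY : EqStar
        ((s (alphaOf ((Set.Iio omega1 \ X) ∪ (Set.Iio omega1 \ Y))) ''
          USet (Set.Iio omega1 \ Y))ᶜ) (hmap s Y) := by
      rw [eY]
      exact eqStar_compl (image_eqStar hs hα (alphaOf_le hbdY')
        (USet_subset_Iio (alphaOf_spec Set.diff_subset)))
    refine eqStar_trans (eqStar_compl (eqStar_symm (image_eqStar hs hα
      (alphaOf_le (alphaOf_spec hZsub)) (USet_subset_Iio (alphaOf_spec hZsub))))) ?_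
    rw [USet_union, Set.image_union, Set.compl_union]
    exact eqStar_inter fX fY

/-! ### Union -/

lemma hmap_union {s : Ordinal → Ordinal → ℕ} (hs : IsCoherentFamily s)
    {X Y : Set Ordinal} (hX : X ⊆ Set.Iio omega1) (hY : Y ⊆ Set.Iio omega1)
    (horX : X.Countable ∨ (Set.Iio omega1 \ X).Countable)
    (horY : Y.Countable ∨ (Set.Iio omega1 \ Y).Countable) :
    EqStar (hmap s (X ∪ Y)) (hmap s X ∪ hmap s Y) := by
  have e1 : Set.Iio omega1 \ ((Set.Iio omega1 \ X) ∩ (Set.Iio omega1 \ Y)) = X ∪ Y := by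
    ext z
    constructor
    · rintro ⟨hz, h⟩
      by_cases hzX : z ∈ X
      · exact Or.inl hzX
      · by_cases hzY : z ∈ Y
        · exact Or.inr hzY
        · exact absurd ⟨⟨hz, hzX⟩, ⟨hz, hzY⟩⟩ h
    · rintro (h | h)
      · exact ⟨hX h, fun hc => hc.1.2 h⟩
      · exact ⟨hY h, fun hc => hc.2.2 h⟩
  have hWsub : (Set.Iio omega1 \ X) ∩ (Set.Iio omega1 \ Y) ⊆ Set.Iio omega1 :=
    fun z hz => hz.1.1
  have horW : ((Set.Iio omega1 \ X) ∩ (Set.Iio omega1 \ Y)).Countable ∨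
      (Set.Iio omega1 \ ((Set.Iio omega1 \ X) ∩ (Set.Iio omega1 \ Y))).Countable := by
    rcases horX with h | h
    · rcases horY with h2 | h2
      · right
        rw [e1]
        exact h.union h2
      · left
        exact h2.mono Set.inter_subset_right
    · left
      exact h.mono Set.inter_subset_left
  have e2 : hmap s (X ∪ Y) =
      (hmap s ((Set.Iio omega1 \ X) ∩ (Set.Iio omega1 \ Y)))ᶜ := by
    rw [← e1, hmap_compl hWsub horW]
  have horX' : (Set.Iio omega1 \ X).Countable ∨
      (Set.Iio omega1 \ (Set.Iio omega1 \ X)).Countable := by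
    rw [Set.diff_diff_cancel_left hX]
    exact horX.symm
  have horY' : (Set.Iio omega1 \ Y).Countable ∨
      (Set.Iio omega1 \ (Set.Iio omega1 \ Y)).Countable := by
    rw [Set.diff_diff_cancel_left hY]
    exact horY.symm
  have e3X : (hmap s (Set.Iio omega1 \ X))ᶜ = hmap s X := by
    rw [hmap_compl hX horX, compl_compl]
  have e3Y : (hmap s (Set.Iio omega1 \ Y))ᶜ = hmap s Y := by
    rw [hmap_compl hY horY, compl_compl]
  rw [e2]
  refine eqStar_trans (eqStar_compl (hmap_inter hs Set.diff_subset Set.diff_subset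
    horX' horY')) ?_
  rw [Set.compl_inter, e3X, e3Y]
  exact eqStar_refl _

/-! ### Injectivity -/

lemma not_eqStar_ctble {s : Ordinal → Ordinal → ℕ} (hs : IsCoherentFamily s)
    {X Y : Set Ordinal} {ξ : Ordinal} (hX : X ⊆ Set.Iio omega1) (hY : Y ⊆ Set.Iio omega1)
    (hXc : X.Countable) (hYc : Y.Countable) (hξX : ξ ∈ X) (hξY : ξ ∉ Y) :
    ¬ EqStar (hmap s X) (hmap s Y) := by
  intro he
  have hZsub : X ∪ Y ⊆ Set.Iio omega1 := Set.union_subset hX hY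
  have hα : alphaOf (X ∪ Y) < omega1 := alphaOf_lt_omega1 hZsub (hXc.union hYc)
  have hbdX : ∀ η ∈ X, η < alphaOf (X ∪ Y) := fun η h => alphaOf_spec hZsub η (Or.inl h)
  have hbdY : ∀ η ∈ Y, η < alphaOf (X ∪ Y) := fun η h => alphaOf_spec hZsub η (Or.inr h)
  have hinj := (hs _ hα).1
  have e1 := hmap_ctble_eqStar hs hX hXc hα hbdX
  have e2 := hmap_ctble_eqStar hs hY hYc hα hbdY
  have he2 : EqStar (s (alphaOf (X ∪ Y)) '' USet X) (s (alphaOf (X ∪ Y)) '' USet Y) :=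
    eqStar_trans (eqStar_symm e1) (eqStar_trans he e2)
  have hsub : s (alphaOf (X ∪ Y)) '' Iseg ξ ⊆
      s (alphaOf (X ∪ Y)) '' USet X \ s (alphaOf (X ∪ Y)) '' USet Y := by
    rintro n ⟨x, hx, rfl⟩
    refine ⟨Set.mem_image_of_mem _ (Iseg_subset_USet hξX hx), ?_⟩
    rintro ⟨y, hyU, hyx⟩
    have hxd : x < Ordinal.omega0 * alphaOf (X ∪ Y) := Iseg_upper (hbdX ξ hξX) hx
    have hyd : y < Ordinal.omega0 * alphaOf (X ∪ Y) := USet_subset_Iio hbdY hyU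
    have hyx2 : y = x := hinj hyd hxd hyx
    obtain ⟨η, hη, hyI⟩ := mem_USet_iff.mp hyU
    by_cases hne : ξ = η
    · exact hξY (hne ▸ hη)
    · exact Iseg_disjoint hne x hx (hyx2 ▸ hyI)
  have hinf : (s (alphaOf (X ∪ Y)) '' Iseg ξ).Infinite :=
    (Iseg_infinite ξ).image (hinj.mono fun x hx => Iseg_upper (hbdX ξ hξX) hx)
  exact (hinf.mono hsub) (he2.subset Set.subset_union_left)

lemma not_eqStar_ctble_ne {s : Ordinal → Ordinal → ℕ} (hs : IsCoherentFamily s)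
    {X Y : Set Ordinal} (hX : X ⊆ Set.Iio omega1) (hY : Y ⊆ Set.Iio omega1)
    (hXc : X.Countable) (hYc : Y.Countable) (hne : X ≠ Y) :
    ¬ EqStar (hmap s X) (hmap s Y) := by
  have hwit : (∃ ξ, ξ ∈ X ∧ ξ ∉ Y) ∨ (∃ ξ, ξ ∈ Y ∧ ξ ∉ X) := by
    by_contra h
    push_neg at h
    obtain ⟨h1, h2⟩ := h
    exact hne (Set.Subset.antisymm (fun z hz => h1 z hz) (fun z hz => h2 z hz))
  rcases hwit with ⟨ξ, h1, h2⟩ | ⟨ξ, h1, h2⟩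
  · exact not_eqStar_ctble hs hX hY hXc hYc h1 h2
  · intro he
    exact not_eqStar_ctble hs hY hX hYc hXc h1 h2 (eqStar_symm he)

lemma not_eqStar_mixed {s : Ordinal → Ordinal → ℕ} (hs : IsCoherentFamily s)
    {X Y : Set Ordinal} (hX : X ⊆ Set.Iio omega1) (hY : Y ⊆ Set.Iio omega1)
    (hXc : X.Countable) (hYnc : ¬ Y.Countable)
    (hY'c : (Set.Iio omega1 \ Y).Countable) :
    ¬ EqStar (hmap s X) (hmap s Y) := by
  intro he
  have hns : ¬ (Set.Iio omega1 ⊆ X ∪ (Set.Iio omega1 \ Y)) :=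
    fun h => not_countable_Iio_omega1 ((hXc.union hY'c).mono h)
  obtain ⟨ξ, hξI, hξn⟩ := Set.not_subset.mp hns
  have hξX : ξ ∉ X := fun h => hξn (Or.inl h)
  have hξY' : ξ ∉ Set.Iio omega1 \ Y := fun h => hξn (Or.inr h)
  have hZsub : insert ξ (X ∪ (Set.Iio omega1 \ Y)) ⊆ Set.Iio omega1 :=
    Set.insert_subset hξI (Set.union_subset hX Set.diff_subset)
  have hZc : (insert ξ (X ∪ (Set.Iio omega1 \ Y))).Countable :=
    (hXc.union hY'c).insert ξ
  have hα : alphaOf (insert ξ (X ∪ (Set.Iio omega1 \ Y))) < omega1 :=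
    alphaOf_lt_omega1 hZsub hZc
  have hbdX : ∀ η ∈ X, η < alphaOf (insert ξ (X ∪ (Set.Iio omega1 \ Y))) :=
    fun η h => alphaOf_spec hZsub η (Set.mem_insert_of_mem _ (Or.inl h))
  have hbdY' : ∀ η ∈ Set.Iio omega1 \ Y,
      η < alphaOf (insert ξ (X ∪ (Set.Iio omega1 \ Y))) :=
    fun η h => alphaOf_spec hZsub η (Set.mem_insert_of_mem _ (Or.inr h))
  have hbdξ : ξ < alphaOf (insert ξ (X ∪ (Set.Iio omega1 \ Y))) :=
    alphaOf_spec hZsub ξ (Set.mem_insert _ _)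
  have hinj := (hs _ hα).1
  have e1 := hmap_ctble_eqStar hs hX hXc hα hbdX
  have e2 : EqStar (hmap s Y)
      ((s (alphaOf (insert ξ (X ∪ (Set.Iio omega1 \ Y)))) ''
        USet (Set.Iio omega1 \ Y))ᶜ) := by
    rw [hmap, if_neg hYnc]
    exact eqStar_compl (eqStar_symm (image_eqStar hs hα (alphaOf_le hbdY')
      (USet_subset_Iio (alphaOf_spec Set.diff_subset))))
  have he2 : EqStar
      (s (alphaOf (insert ξ (X ∪ (Set.Iio omega1 \ Y)))) '' USet X)
      ((s (alphaOf (insert ξ (X ∪ (Set.Iio omega1 \ Y)))) ''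
        USet (Set.Iio omega1 \ Y))ᶜ) :=
    eqStar_trans (eqStar_symm e1) (eqStar_trans he e2)
  have hsub : s (alphaOf (insert ξ (X ∪ (Set.Iio omega1 \ Y)))) '' Iseg ξ ⊆
      (s (alphaOf (insert ξ (X ∪ (Set.Iio omega1 \ Y)))) ''
        USet (Set.Iio omega1 \ Y))ᶜ \
      s (alphaOf (insert ξ (X ∪ (Set.Iio omega1 \ Y)))) '' USet X := by
    rintro n ⟨x, hx, rfl⟩
    have hxd : x < Ordinal.omega0 * alphaOf (insert ξ (X ∪ (Set.Iio omega1 \ Y))) :=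
      Iseg_upper hbdξ hx
    constructor
    · rintro ⟨y, hyU, hyx⟩
      have hyd := USet_subset_Iio hbdY' hyU
      have hyx2 : y = x := hinj hyd hxd hyx
      obtain ⟨η, hη, hyI⟩ := mem_USet_iff.mp hyU
      by_cases hne : ξ = η
      · exact hξY' (hne ▸ hη)
      · exact Iseg_disjoint hne x hx (hyx2 ▸ hyI)
    · rintro ⟨y, hyU, hyx⟩
      have hyd := USet_subset_Iio hbdX hyU
      have hyx2 : y = x := hinj hyd hxd hyx
      obtain ⟨η, hη, hyI⟩ := mem_USet_iff.mp hyU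
      by_cases hne : ξ = η
      · exact hξX (hne ▸ hη)
      · exact Iseg_disjoint hne x hx (hyx2 ▸ hyI)
  have hinf : (s (alphaOf (insert ξ (X ∪ (Set.Iio omega1 \ Y)))) '' Iseg ξ).Infinite :=
    (Iseg_infinite ξ).image (hinj.mono fun x hx => Iseg_upper hbdξ hx)
  exact (hinf.mono hsub) (he2.subset Set.subset_union_right)

end Aux


/-- for a coherent family `{s_α}`, the map `h` on the Boolean algebra `𝒜`
of sets `U_X` (`X ⊆ ω₁` countable or cocountable) is a well-defined injective Boolean
homomorphism into `𝒫(ℕ)/Fin`: it preserves `∩`, `∪`, complement, `⊥` and `⊤` modulo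
finite sets, and distinct elements of `𝒜` have `≠*` images. -/
theorem stmt9 (s : Ordinal → Ordinal → ℕ) (hs : IsCoherentFamily s) :
    ∀ X Y : Set Ordinal, X ⊆ Set.Iio omega1 → Y ⊆ Set.Iio omega1 →
      (X.Countable ∨ (Set.Iio omega1 \ X).Countable) →
      (Y.Countable ∨ (Set.Iio omega1 \ Y).Countable) →
      EqStar (hmap s (X ∩ Y)) (hmap s X ∩ hmap s Y) ∧
      EqStar (hmap s (X ∪ Y)) (hmap s X ∪ hmap s Y) ∧
      EqStar (hmap s (Set.Iio omega1 \ X)) ((hmap s X)ᶜ) ∧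
      EqStar (hmap s (∅ : Set Ordinal)) (∅ : Set ℕ) ∧
      EqStar (hmap s (Set.Iio omega1)) (Set.univ : Set ℕ) ∧
      (X ≠ Y → ¬ EqStar (hmap s X) (hmap s Y)) := by
  intro X Y hX hY horX horY
  refine ⟨hmap_inter hs hX hY horX horY, hmap_union hs hX hY horX horY, ?_, ?_, ?_, ?_⟩
  · rw [hmap_compl hX horX]
    exact eqStar_refl _
  · rw [hmap_empty]
    exact eqStar_refl _
  · rw [hmap_univ]
    exact eqStar_refl _
  · intro hne
    by_cases hXc : X.Countable <;> by_cases hYc : Y.Countable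
    · exact not_eqStar_ctble_ne hs hX hY hXc hYc hne
    · exact not_eqStar_mixed hs hX hY hXc hYc (horY.resolve_left hYc)
    · intro he
      exact not_eqStar_mixed hs hY hX hYc hXc (horX.resolve_left hXc) (eqStar_symm he)
    · have hX'c : (Set.Iio omega1 \ X).Countable := horX.resolve_left hXc
      have hY'c : (Set.Iio omega1 \ Y).Countable := horY.resolve_left hYc
      have hne' : Set.Iio omega1 \ X ≠ Set.Iio omega1 \ Y := by
        intro h
        exact hne (by rw [← Set.diff_diff_cancel_left hX, h, Set.diff_diff_cancel_left hY])
      intro he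
      have heq : EqStar (hmap s (Set.Iio omega1 \ X)) (hmap s (Set.Iio omega1 \ Y)) := by
        rw [hmap_compl hX horX, hmap_compl hY horY]
        exact eqStar_compl he
      exact not_eqStar_ctble_ne hs Set.diff_subset Set.diff_subset hX'c hY'c hne' heq
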